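/- Let X = [0,1], p > 2, and regard L^p(X) as a dense subspace of H = L^2(X). Suppose (f_n) is a sequence of continuous functions on X with ‖f_n‖_1 → 0, and suppose there is a bounded operator Y : L^2(X) → L^2(X) such that ‖f_n φ − Yφ‖_2 → 0 for every φ ∈ L^p(X). Then Y = 0. -/

import Mathlib

open MeasureTheory Filter
open scoped ENNReal NNReal

/-- On X = [0,1], p > 2: if continuous f_n satisfy ‖f_n‖₁ → 0 and a
bounded operator Y on L² satisfies ‖f_n φ − Yφ‖₂ → 0 for each φ ∈ L^p, then Y = 0. -/
theorem stmt_10 (p : ℝ) (hp : 2 < p)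
    (f : ℕ → ℝ → ℂ)
    (hcont : ∀ n, ContinuousOn (f n) (Set.Icc (0:ℝ) 1))
    (h1 : Tendsto (fun n => eLpNorm (f n) 1 (volume.restrict (Set.Icc (0:ℝ) 1)))
      atTop (nhds 0))
    (Y : Lp ℂ 2 (volume.restrict (Set.Icc (0:ℝ) 1)) →L[ℂ]
      Lp ℂ 2 (volume.restrict (Set.Icc (0:ℝ) 1)))
    (hY : ∀ (φ : ℝ → ℂ),
      MemLp φ (ENNReal.ofReal p) (volume.restrict (Set.Icc (0:ℝ) 1)) →
      ∀ (hφ2 : MemLp φ 2 (volume.restrict (Set.Icc (0:ℝ) 1))),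
      Tendsto (fun n => eLpNorm
        (fun x => f n x * φ x - (Y (hφ2.toLp φ) : ℝ → ℂ) x) 2
        (volume.restrict (Set.Icc (0:ℝ) 1))) atTop (nhds 0)) :
    Y = 0 := by
  revert hY Y
  set μ := volume.restrict (Set.Icc (0:ℝ) 1) with hμ
  intro Y hY
  haveI : IsProbabilityMeasure μ := by
    constructor
    rw [hμ, Measure.restrict_apply_univ]
    simp [Real.volume_Icc]
  -- it suffices to show Y vanishes on simple functions
  suffices hsf : ∀ ψ : Lp.simpleFunc ℂ 2 μ, Y (ψ : Lp ℂ 2 μ) = 0 by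
    have hd : DenseRange ((↑) : Lp.simpleFunc ℂ 2 μ → Lp ℂ 2 μ) :=
      Lp.simpleFunc.denseRange (by norm_num)
    have : ⇑Y = ⇑(0 : Lp ℂ 2 μ →L[ℂ] Lp ℂ 2 μ) := by
      refine hd.equalizer Y.continuous (0 : Lp ℂ 2 μ →L[ℂ] Lp ℂ 2 μ).continuous ?_
      funext ψ
      simpa using hsf ψ
    exact ContinuousLinearMap.coeFn_injective this
  intro ψ
  set φ : ℝ → ℂ := ⇑(Lp.simpleFunc.toSimpleFunc ψ) with hφdef
  obtain ⟨C, hC⟩ := (Lp.simpleFunc.toSimpleFunc ψ).exists_forall_norm_le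
  have hC0 : 0 ≤ C := le_trans (norm_nonneg (φ 0)) (hC 0)
  have hφm : AEStronglyMeasurable φ μ :=
    (Lp.simpleFunc.toSimpleFunc ψ).aestronglyMeasurable
  have hφp : MemLp φ (ENNReal.ofReal p) μ :=
    MemLp.of_bound hφm C (ae_of_all _ hC)
  have hφ2 : MemLp φ 2 μ := MemLp.of_bound hφm C (ae_of_all _ hC)
  have h2 : hφ2.toLp φ = (ψ : Lp ℂ 2 μ) :=
    Lp.ext ((MemLp.coeFn_toLp hφ2).trans (Lp.simpleFunc.toSimpleFunc_eq_toFun ψ))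
  have hT := hY φ hφp hφ2
  rw [h2] at hT
  -- measurability of f n and products
  have hfm : ∀ n, AEStronglyMeasurable (f n) μ := fun n =>
    ContinuousOn.aestronglyMeasurable (hcont n) measurableSet_Icc
  have hgm : ∀ n, AEStronglyMeasurable (fun x => f n x * φ x) μ := fun n =>
    (hfm n).mul hφm
  have hYm : AEStronglyMeasurable (⇑(Y (ψ : Lp ℂ 2 μ))) μ :=
    Lp.aestronglyMeasurable _
  -- L¹ bound for products
  have hB : ∀ n, eLpNorm (fun x => f n x * φ x) 1 μ
      ≤ (‖(C:ℂ)‖₊ : ℝ≥0∞) * eLpNorm (f n) 1 μ := by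
    intro n
    calc eLpNorm (fun x => f n x * φ x) 1 μ
        ≤ eLpNorm ((C:ℂ) • f n) 1 μ := by
          refine eLpNorm_mono fun x => ?_
          simp only [Pi.smul_apply, smul_eq_mul, norm_mul, Complex.norm_real,
            Real.norm_eq_abs, abs_of_nonneg hC0]
          rw [mul_comm]
          exact mul_le_mul_of_nonneg_right (hC x) (norm_nonneg _)
      _ = (‖(C:ℂ)‖₊ : ℝ≥0∞) * eLpNorm (f n) 1 μ := by rw [eLpNorm_const_smul, enorm_eq_nnnorm]
  -- the right-hand side tends to 0
  have hR : Tendsto (fun n =>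
      eLpNorm (fun x => f n x * φ x - (Y (ψ : Lp ℂ 2 μ) : ℝ → ℂ) x) 2 μ
        + (‖(C:ℂ)‖₊ : ℝ≥0∞) * eLpNorm (f n) 1 μ) atTop (nhds 0) := by
    have := hT.add (ENNReal.Tendsto.const_mul (a := (‖(C:ℂ)‖₊ : ℝ≥0∞)) h1 (Or.inr ENNReal.coe_ne_top))
    simpa using this
  have key : eLpNorm (⇑(Y (ψ : Lp ℂ 2 μ))) 1 μ = 0 := by
    refine le_antisymm (ge_of_tendsto' hR fun n => ?_) zero_le
    calc eLpNorm (⇑(Y (ψ : Lp ℂ 2 μ))) 1 μ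
        = eLpNorm ((fun x => (Y (ψ : Lp ℂ 2 μ) : ℝ → ℂ) x - f n x * φ x)
            + fun x => f n x * φ x) 1 μ := by
          congr 1; funext x; simp
      _ ≤ eLpNorm (fun x => (Y (ψ : Lp ℂ 2 μ) : ℝ → ℂ) x - f n x * φ x) 1 μ
            + eLpNorm (fun x => f n x * φ x) 1 μ :=
          eLpNorm_add_le (hYm.sub (hgm n)) (hgm n) le_rfl
      _ ≤ eLpNorm (fun x => (Y (ψ : Lp ℂ 2 μ) : ℝ → ℂ) x - f n x * φ x) 2 μ
            + (‖(C:ℂ)‖₊ : ℝ≥0∞) * eLpNorm (f n) 1 μ :=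
          add_le_add (eLpNorm_le_eLpNorm_of_exponent_le (by norm_num)
            (hYm.sub (hgm n))) (hB n)
      _ = eLpNorm (fun x => f n x * φ x - (Y (ψ : Lp ℂ 2 μ) : ℝ → ℂ) x) 2 μ
            + (‖(C:ℂ)‖₊ : ℝ≥0∞) * eLpNorm (f n) 1 μ := by
          congr 1
          exact eLpNorm_sub_comm _ _ _ _
  have hzero : ⇑(Y (ψ : Lp ℂ 2 μ)) =ᵐ[μ] 0 :=
    (eLpNorm_eq_zero_iff hYm one_ne_zero).mp key
  exact Lp.eq_zero_iff_ae_eq_zero.mpr hzero
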